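/- The ideal I_b is below the Solecki ideal S in the Rudin–Keisler order: I_b ≤_RK S. -/

import Mathlib

open MeasureTheory Set

/-- An ideal on a (countable) set `X`. -/
def IsIdeal {X : Type} (I : Set (Set X)) : Prop :=
  (∀ A B : Set X, A ∈ I → B ∈ I → A ∪ B ∈ I) ∧
  (∀ A B : Set X, A ⊆ B → B ∈ I → A ∈ I) ∧
  (∀ A : Set X, A.Finite → A ∈ I) ∧
  (Set.univ : Set X) ∉ I

/-- `I`-pointwise convergence on `[0,1]` of a family of functions. -/
def IConvPtwise {X : Type} (I : Set (Set X)) (f : X → ℝ → ℝ) (g : ℝ → ℝ) : Prop :=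
  ∀ t ∈ Icc (0:ℝ) 1, ∀ ε : ℝ, 0 < ε → {a : X | ε ≤ |f a t - g t|} ∈ I

/-- `I`-uniform convergence on `M` of a family of functions. -/
def IConvUnif {X : Type} (I : Set (Set X)) (f : X → ℝ → ℝ) (g : ℝ → ℝ) (M : Set ℝ) : Prop :=
  ∀ ε : ℝ, 0 < ε → {a : X | ∃ t ∈ M, ε ≤ |f a t - g t|} ∈ I

/-- `I` is an Egorov ideal. -/
def IsEgorov {X : Type} (I : Set (Set X)) : Prop :=
  ∀ (f : X → ℝ → ℝ) (g : ℝ → ℝ),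
    (∀ a : X, AEMeasurable (f a) (volume.restrict (Icc (0:ℝ) 1))) →
    AEMeasurable g (volume.restrict (Icc (0:ℝ) 1)) →
    IConvPtwise I f g →
    ∀ η : ℝ, 0 < η →
      ∃ M : Set ℝ, M ⊆ Icc (0:ℝ) 1 ∧ NullMeasurableSet M volume ∧
        volume (Icc (0:ℝ) 1 \ M) < ENNReal.ofReal η ∧
        IConvUnif I f g M

def IsSubmeasure (φ : Set ℕ → ENNReal) : Prop :=
  φ ∅ = 0 ∧ (∀ n : ℕ, φ {n} < ⊤) ∧
  ∀ A B : Set ℕ, φ A ≤ φ (A ∪ B) ∧ φ (A ∪ B) ≤ φ A + φ B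

def IsLscSubmeasure (φ : Set ℕ → ENNReal) : Prop :=
  ∀ A : Set ℕ, φ A = ⨆ n : ℕ, φ (A ∩ Iio n)

def IsNonpathological (φ : Set ℕ → ENNReal) : Prop :=
  ∀ A : Set ℕ, φ A = ⨆ (μ : Measure ℕ) (_ : ∀ B : Set ℕ, μ B ≤ φ B), μ A

/-- `I` is a non-pathological Σ⁰₂ ideal: `I = Fin(φ)` for some non-pathological
lsc submeasure `φ` with `φ(ω) = ∞`. -/
def IsNonpathSigma2 (I : Set (Set ℕ)) : Prop :=
  ∃ φ : Set ℕ → ENNReal, IsSubmeasure φ ∧ IsLscSubmeasure φ ∧ IsNonpathological φ ∧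
    φ Set.univ = ⊤ ∧ I = {A : Set ℕ | φ A < ⊤}

def IdealCountablyGenerated {X : Type} (I : Set (Set X)) : Prop :=
  ∃ B : Set (Set X), B.Countable ∧ B ⊆ I ∧
    ∀ A ∈ I, ∃ F : Set (Set X), F ⊆ B ∧ F.Finite ∧ A ⊆ ⋃₀ F

def IdealIso {X Y : Type} (I : Set (Set X)) (J : Set (Set Y)) : Prop :=
  ∃ f : Y → X, Function.Bijective f ∧ ∀ A : Set X, (A ∈ I ↔ f ⁻¹' A ∈ J)

def RKle {X Y : Type} (I : Set (Set X)) (J : Set (Set Y)) : Prop :=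
  ∃ f : Y → X, ∀ A : Set X, (A ∈ I ↔ f ⁻¹' A ∈ J)

def RBle {X Y : Type} (I : Set (Set X)) (J : Set (Set Y)) : Prop :=
  ∃ f : Y → X, (∀ x : X, (f ⁻¹' {x}).Finite) ∧ ∀ A : Set X, (A ∈ I ↔ f ⁻¹' A ∈ J)

/-- The restriction `I↾A` of an ideal, as an ideal on the subtype `↥A`. -/
def restrictIdeal {X : Type} (I : Set (Set X)) (A : Set X) : Set (Set ↥A) :=
  {S : Set ↥A | (Subtype.val '' S) ∈ I}

def IsTall {X : Type} (I : Set (Set X)) : Prop :=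
  ∀ A : Set X, A.Infinite → ∃ B ∈ I, B.Infinite ∧ B ⊆ A

/-- The branch `A_x = {x↾n : n ∈ ω} ⊆ 2^{<ω}` of `x ∈ 2^ω`. -/
def branchSet (x : ℕ → Bool) : Set (List Bool) :=
  {s : List Bool | ∃ n : ℕ, s = (List.range n).map x}

/-- The ideal `I_b` on `2^{<ω}`, generated by the branches `A_x` for `x ∈ 2^ω`. -/
def IbIdeal : Set (Set (List Bool)) :=
  {B | ∃ F : Set (ℕ → Bool), F.Finite ∧ B ⊆ ⋃ x ∈ F, branchSet x}

/-- `C ⊆ 2^ω` is determined by its first `n` coordinates. -/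
def DetBy (C : Set (ℕ → Bool)) (n : ℕ) : Prop :=
  ∀ x y : ℕ → Bool, (∀ i : ℕ, i < n → x i = y i) → (x ∈ C → y ∈ C)

/-- `Ω`: the family of all clopen subsets of `2^ω` of Haar measure `1/2`. A clopen set
is determined by its first `n` coordinates for some `n`, and having measure `1/2` means
that exactly `2^n / 2` of the `2^n` many patterns of the first `n` coordinates lie in it
(the patterns are counted via their extensions by `false`). -/
def OmegaHalf : Set (Set (ℕ → Bool)) :=
  {C | IsClopen C ∧ ∃ n : ℕ, DetBy C n ∧
    2 * Nat.card {s : ℕ → Bool // s ∈ C ∧ ∀ i : ℕ, n ≤ i → s i = false} = 2 ^ n}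

/-- The generator `B_x = {C ∈ Ω : x ∈ C}` of the Solecki ideal. -/
def SolGen (x : ℕ → Bool) : Set ↥OmegaHalf := {C : ↥OmegaHalf | x ∈ C.1}

/-- The Solecki ideal `S` on `Ω`, generated by the sets `B_x` for `x ∈ 2^ω`. -/
def SoleckiIdeal : Set (Set ↥OmegaHalf) :=
  {A | ∃ F : Set (ℕ → Bool), F.Finite ∧ A ⊆ ⋃ x ∈ F, SolGen x}

namespace IbSol

/-- the pattern of a finite list, as a function. -/
def pat (s : List Bool) : ℕ → Bool := fun i => s.getD i false

/-- `z` lies in the cylinder `[s]`. -/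
def inCyl (s : List Bool) (z : ℕ → Bool) : Prop := ∀ i < s.length, z i = pat s i

/-- `[s] ⊆ C`. -/
def cylSub (s : List Bool) (C : Set (ℕ → Bool)) : Prop := ∀ z, inCyl s z → z ∈ C

lemma pat_eq (s : List Bool) {i : ℕ} (h : i < s.length) : pat s i = s[i] :=
  List.getD_eq_getElem s false h

lemma mem_branch_iff (x : ℕ → Bool) (s : List Bool) : s ∈ branchSet x ↔ inCyl s x := by
  constructor
  · rintro ⟨n, rfl⟩
    intro i hi
    rw [pat_eq _ hi]
    simp
  · intro h
    refine ⟨s.length, ?_⟩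
    apply List.ext_getElem
    · simp
    · intro i h1 h2
      simp only [List.getElem_map, List.getElem_range]
      rw [← pat_eq s h1]
      exact (h i h1).symm

lemma detBy_compl {C : Set (ℕ → Bool)} {n : ℕ} (h : DetBy C n) : DetBy Cᶜ n := by
  intro x y hxy hx
  intro hy
  exact hx (h y x (fun i hi => (hxy i hi).symm) hy)

lemma isOpen_of_detBy {C : Set (ℕ → Bool)} {n : ℕ} (h : DetBy C n) : IsOpen C := by
  rw [isOpen_iff_forall_mem_open]
  intro y hy
  refine ⟨⋂ i ∈ Finset.range n, (fun z : ℕ → Bool => z i) ⁻¹' {y i}, ?_, ?_, ?_⟩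
  · intro z hz
    simp only [Set.mem_iInter, Set.mem_preimage, Set.mem_singleton_iff, Finset.mem_range] at hz
    exact h y z (fun i hi => (hz i hi).symm) hy
  · exact isOpen_biInter_finset fun i _ => (continuous_apply i).isOpen_preimage _ (isOpen_discrete _)
  · simp

lemma isClopen_of_detBy {C : Set (ℕ → Bool)} {n : ℕ} (h : DetBy C n) : IsClopen C :=
  ⟨by rw [← isOpen_compl_iff]; exact isOpen_of_detBy (detBy_compl h), isOpen_of_detBy h⟩

/-- counting via an involution swapping `C` and `Cᶜ`. -/
lemma two_mul_card (C : Set (ℕ → Bool)) (N : ℕ)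
    (ι : (ℕ → Bool) → ℕ → Bool)
    (hinv : ∀ z, ι (ι z) = z)
    (hsupp : ∀ z, (∀ i, N ≤ i → z i = false) → ∀ i, N ≤ i → ι z i = false)
    (hswap : ∀ z, (∀ i, N ≤ i → z i = false) → (z ∈ C ↔ ι z ∉ C)) :
    2 * Nat.card {σ : ℕ → Bool // σ ∈ C ∧ ∀ i : ℕ, N ≤ i → σ i = false} = 2 ^ N := by
  classical
  set ex : (Fin N → Bool) → ℕ → Bool :=
    fun g i => if h : i < N then g ⟨i, h⟩ else false with hex
  have hexsupp : ∀ g, ∀ i, N ≤ i → ex g i = false := by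
    intro g i hi
    simp only [hex, dif_neg (Nat.not_lt.mpr hi)]
  have hrestr : ∀ z : ℕ → Bool, (∀ i, N ≤ i → z i = false) →
      ex (fun j : Fin N => z j.1) = z := by
    intro z hz
    funext i
    by_cases h : i < N
    · simp [hex, h]
    · simp only [hex, dif_neg h]
      exact (hz i (Nat.not_lt.mp h)).symm
  -- equivalence with the subtype of Fin N → Bool
  have e : {σ : ℕ → Bool // σ ∈ C ∧ ∀ i : ℕ, N ≤ i → σ i = false}
      ≃ {g : Fin N → Bool // ex g ∈ C} :=
    { toFun := fun σ => ⟨fun j => σ.1 j.1, by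
        show ex (fun j : Fin N => σ.1 j.1) ∈ C
        rw [hrestr σ.1 σ.2.2]; exact σ.2.1⟩
      invFun := fun g => ⟨ex g.1, g.2, hexsupp g.1⟩
      left_inv := fun σ => Subtype.ext (hrestr σ.1 σ.2.2)
      right_inv := fun g => Subtype.ext (by
        funext j
        simp [hex]) }
  rw [Nat.card_congr e, Nat.card_eq_fintype_card]
  -- the involution at Fin N level
  have key : ∀ g : Fin N → Bool, ex g ∈ C → ¬ (ex (fun j : Fin N => ι (ex g) j.1) ∈ C) := by
    intro g hg
    rw [hrestr _ (hsupp (ex g) (hexsupp g))]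
    exact (hswap (ex g) (hexsupp g)).mp hg
  have key2 : ∀ g : Fin N → Bool, ¬ (ex g ∈ C) → ex (fun j : Fin N => ι (ex g) j.1) ∈ C := by
    intro g hg
    rw [hrestr _ (hsupp (ex g) (hexsupp g))]
    by_contra hcon
    exact hg ((hswap (ex g) (hexsupp g)).mpr hcon)
  have einv : ∀ g : Fin N → Bool, (fun j : Fin N => ι (ex (fun j' : Fin N => ι (ex g) j'.1)) j.1) = g := by
    intro g
    funext j
    rw [hrestr _ (hsupp (ex g) (hexsupp g)), hinv]
    simp [hex]
  have e2 : {g : Fin N → Bool // ex g ∈ C} ≃ {g : Fin N → Bool // ¬ (ex g ∈ C)} :=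
    { toFun := fun g => ⟨fun j => ι (ex g.1) j.1, key g.1 g.2⟩
      invFun := fun g => ⟨fun j => ι (ex g.1) j.1, key2 g.1 g.2⟩
      left_inv := fun g => Subtype.ext (einv g.1)
      right_inv := fun g => Subtype.ext (einv g.1) }
  have hcompl : Fintype.card {g : Fin N → Bool // ¬ (ex g ∈ C)}
      = Fintype.card (Fin N → Bool) - Fintype.card {g : Fin N → Bool // ex g ∈ C} :=
    Fintype.card_subtype_compl _
  have hle : Fintype.card {g : Fin N → Bool // ex g ∈ C} ≤ Fintype.card (Fin N → Bool) :=
    Fintype.card_subtype_le _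
  have hcards : Fintype.card {g : Fin N → Bool // ex g ∈ C}
      = Fintype.card {g : Fin N → Bool // ¬ (ex g ∈ C)} := Fintype.card_congr e2
  have htot : Fintype.card (Fin N → Bool) = 2 ^ N := by simp
  omega


/-! ### Boolean helpers -/

lemma bool_not_eq_iff (a b : Bool) : ((!a) = b) ↔ (a = (!b)) := by revert a b; decide
lemma bool_ne_not (a : Bool) : ¬ (a = (!a)) := by revert a; decide
lemma bool_swap (a c : Bool) : (a = c) ↔ ¬((!a) = c) := by revert a c; decide

/-! ### The construction -/

/-- The "sibling" pattern: `s` with its last bit flipped. -/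
def patS' (s : List Bool) : ℕ → Bool :=
  fun i => if i = s.length - 1 then !(pat s i) else pat s i

/-- `z` lies in the sibling cylinder. -/
def inCyl' (s : List Bool) (z : ℕ → Bool) : Prop := ∀ i < s.length, z i = patS' s i

/-- truncation below `L`. -/
def trunc (L : ℕ) (z : ℕ → Bool) : ℕ → Bool := fun i => if i < L then z i else false

/-- The clopen set `[s] ∪ {z ∉ [s] ∪ [s'] : z L = b (z↾L)}`. -/
def sideC (s : List Bool) (L : ℕ) (b : (ℕ → Bool) → Bool) : Set (ℕ → Bool) :=
  {z | inCyl s z ∨ (¬ inCyl s z ∧ ¬ inCyl' s z ∧ z L = b (trunc L z))}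

section SideC

variable {s : List Bool} {L : ℕ} {b : (ℕ → Bool) → Bool}

lemma not_both (h1 : 1 ≤ s.length) {z : ℕ → Bool} (h : inCyl s z) (h' : inCyl' s z) : False := by
  have hlt : s.length - 1 < s.length := Nat.sub_lt h1 one_pos
  have e1 := h _ hlt
  have e2 := h' _ hlt
  rw [e1] at e2
  rw [patS', if_pos rfl] at e2
  exact bool_ne_not _ e2

lemma mem_of_inCyl {z : ℕ → Bool} (h : inCyl s z) : z ∈ sideC s L b := Or.inl h

lemma not_mem_of_inCyl' (h1 : 1 ≤ s.length) {z : ℕ → Bool} (h : inCyl' s z) :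
    z ∉ sideC s L b := by
  rintro (hz | ⟨-, hz, -⟩)
  · exact not_both h1 hz h
  · exact hz h

lemma mem_iff_out {z : ℕ → Bool} (h : ¬ inCyl s z) (h' : ¬ inCyl' s z) :
    z ∈ sideC s L b ↔ z L = b (trunc L z) := by
  constructor
  · rintro (hz | ⟨-, -, hz⟩)
    · exact absurd hz h
    · exact hz
  · intro hz
    exact Or.inr ⟨h, h', hz⟩

lemma inCyl_congr {x y : ℕ → Bool} (h : ∀ i < s.length, x i = y i) :
    inCyl s x ↔ inCyl s y := by
  constructor <;> intro hc i hi
  · rw [← h i hi]; exact hc i hi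
  · rw [h i hi]; exact hc i hi

lemma inCyl'_congr {x y : ℕ → Bool} (h : ∀ i < s.length, x i = y i) :
    inCyl' s x ↔ inCyl' s y := by
  constructor <;> intro hc i hi
  · rw [← h i hi]; exact hc i hi
  · rw [h i hi]; exact hc i hi

lemma detBy_sideC (hL : s.length ≤ L) : DetBy (sideC s L b) (L + 1) := by
  intro x y hagr hx
  have h1 : ∀ i < s.length, x i = y i := fun i hi => hagr i (by omega)
  have h2 : trunc L x = trunc L y := by
    funext i
    unfold trunc
    by_cases h : i < L
    · rw [if_pos h, if_pos h, hagr i (by omega)]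
    · rw [if_neg h, if_neg h]
  have h3 : x L = y L := hagr L (by omega)
  rcases hx with hx | ⟨ha, hb', hc⟩
  · exact Or.inl ((inCyl_congr h1).mp hx)
  · refine Or.inr ⟨fun h => ha ((inCyl_congr h1).mpr h),
      fun h => hb' ((inCyl'_congr h1).mpr h), ?_⟩
    rw [← h3, ← h2]
    exact hc

lemma uniq_sideC (h1 : 1 ≤ s.length) (hL : s.length ≤ L) :
    ∀ t : List Bool, cylSub t (sideC s L b) → t.length ≤ s.length → t = s := by
  classical
  intro t ht hlen
  set n := s.length with hn
  set m := t.length with hm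
  by_cases hB : ∀ i < m, pat t i = patS' s i
  · -- impossible: the sibling witness would lie in `sideC`
    exfalso
    set z : ℕ → Bool := fun i => if i < n then patS' s i else false with hz
    have hzcylB : inCyl t z := by
      intro i hi
      have hin : i < n := lt_of_lt_of_le hi hlen
      rw [hz]
      simp only [if_pos hin]
      exact (hB i hi).symm
    have hzC := ht z hzcylB
    have hz' : inCyl' s z := by
      intro i hi
      rw [hz]; exact if_pos hi
    exact not_mem_of_inCyl' h1 hz' hzC
  · push_neg at hB
    obtain ⟨i0, hi0m, hi0⟩ := hB
    by_cases hA : ∀ j < m, pat t j = pat s j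
    · -- t is an initial segment of s; forced to equal s
      have hieq : i0 = n - 1 := by
        by_contra hne
        apply hi0
        rw [hA i0 hi0m, patS', if_neg hne]
      have hmn : m = n := by omega
      apply List.ext_getElem (by omega)
      intro j hj1 hj2
      rw [← pat_eq t hj1, ← pat_eq s hj2]
      exact hA j (by omega)
    · push_neg at hA
      obtain ⟨j0, hj0m, hj0⟩ := hA
      exfalso
      have hmL : m ≤ L := le_trans hlen hL
      set p : ℕ → Bool := fun i => if i < m then pat t i else false with hp
      set v : Bool := !(b p) with hv
      set z : ℕ → Bool := fun i => if i < m then pat t i else if i = L then v else false with hz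
      have hzcyl : inCyl t z := by
        intro i hi
        rw [hz]; exact if_pos hi
      have hzC := ht z hzcyl
      have hnS : ¬ inCyl s z := by
        intro h
        apply hj0
        have := h j0 (lt_of_lt_of_le hj0m hlen)
        rw [hz] at this
        simp only [if_pos hj0m] at this
        exact this
      have hnS' : ¬ inCyl' s z := by
        intro h
        apply hi0
        have := h i0 (lt_of_lt_of_le hi0m hlen)
        rw [hz] at this
        simp only [if_pos hi0m] at this
        exact this
      have htr : trunc L z = p := by
        funext i
        show (if i < L then z i else false) = if i < m then pat t i else false
        by_cases h2 : i < m
        · rw [if_pos h2, if_pos (show i < L by omega)]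
          show (if i < m then pat t i else if i = L then v else false) = pat t i
          rw [if_pos h2]
        · rw [if_neg h2]
          by_cases h : i < L
          · rw [if_pos h]
            show (if i < m then pat t i else if i = L then v else false) = false
            rw [if_neg h2, if_neg (show ¬ i = L by omega)]
          · rw [if_neg h]
      have hzL : z L = v := by
        show (if L < m then pat t L else if L = L then v else false) = v
        rw [if_neg (show ¬ L < m by omega), if_pos rfl]
      have := (mem_iff_out hnS hnS').mp hzC
      rw [htr, hzL, hv] at this
      exact bool_ne_not (b p) this.symm

lemma omegaHalf_sideC (h1 : 1 ≤ s.length) (hL : s.length ≤ L) :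
    sideC s L b ∈ OmegaHalf := by
  classical
  set n := s.length with hn
  have hdet : DetBy (sideC s L b) (L + 1) := detBy_sideC hL
  refine ⟨isClopen_of_detBy hdet, L + 1, hdet, ?_⟩
  set ι : (ℕ → Bool) → ℕ → Bool := fun z =>
    if inCyl s z ∨ inCyl' s z then Function.update z (n - 1) (!(z (n - 1)))
    else Function.update z L (!(z L)) with hι
  -- behaviour of the two updates
  have hflip1 : ∀ z : ℕ → Bool,
      (inCyl s (Function.update z (n - 1) (!(z (n - 1)))) ↔ inCyl' s z) ∧
      (inCyl' s (Function.update z (n - 1) (!(z (n - 1)))) ↔ inCyl s z) := by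
    intro z
    set u := Function.update z (n - 1) (!(z (n - 1))) with hu
    have hui : ∀ i, u i = if i = n - 1 then !(z (n - 1)) else z i := by
      intro i; rw [hu, Function.update_apply]
    have hlt : n - 1 < n := Nat.sub_lt h1 one_pos
    constructor
    · constructor
      · intro h i hi
        rcases eq_or_ne i (n - 1) with rfl | hne
        · have := h _ hlt
          rw [hui, if_pos rfl] at this
          rw [patS', if_pos rfl]
          exact (bool_not_eq_iff _ _).mp this
        · have := h i hi
          rw [hui, if_neg hne] at this
          rw [patS', if_neg hne]
          exact this
      · intro h i hi
        rw [hui]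
        rcases eq_or_ne i (n - 1) with rfl | hne
        · rw [if_pos rfl]
          have := h _ hlt
          rw [patS', if_pos rfl] at this
          exact (bool_not_eq_iff _ _).mpr this
        · rw [if_neg hne]
          have := h i hi
          rw [patS', if_neg hne] at this
          exact this
    · constructor
      · intro h i hi
        rcases eq_or_ne i (n - 1) with rfl | hne
        · have := h _ hlt
          rw [hui, if_pos rfl, patS', if_pos rfl] at this
          have h2 := (bool_not_eq_iff _ _).mp this
          rw [Bool.not_not] at h2
          exact h2
        · have := h i hi
          rw [hui, if_neg hne, patS', if_neg hne] at this
          exact this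
      · intro h i hi
        rw [hui, patS']
        rcases eq_or_ne i (n - 1) with rfl | hne
        · rw [if_pos rfl, if_pos rfl, h _ hlt]
        · rw [if_neg hne, if_neg hne]
          exact h i hi
  have hflip2 : ∀ z : ℕ → Bool,
      (inCyl s (Function.update z L (!(z L))) ↔ inCyl s z) ∧
      (inCyl' s (Function.update z L (!(z L))) ↔ inCyl' s z) := by
    intro z
    have hagr : ∀ i < s.length, Function.update z L (!(z L)) i = z i := by
      intro i hi
      rw [Function.update_apply, if_neg (by omega : ¬ i = L)]
    exact ⟨inCyl_congr hagr, inCyl'_congr hagr⟩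
  -- involution
  have hinv : ∀ z, ι (ι z) = z := by
    intro z
    by_cases h : inCyl s z ∨ inCyl' s z
    · rw [hι]
      simp only [if_pos h]
      have h2 : inCyl s (Function.update z (n - 1) (!(z (n - 1)))) ∨
          inCyl' s (Function.update z (n - 1) (!(z (n - 1)))) := by
        rcases h with h | h
        · exact Or.inr ((hflip1 z).2.mpr h)
        · exact Or.inl ((hflip1 z).1.mpr h)
      simp only [if_pos h2]
      rw [Function.update_self, Bool.not_not, Function.update_idem, Function.update_eq_self]
    · rw [hι]
      simp only [if_neg h]
      have h2 : ¬ (inCyl s (Function.update z L (!(z L))) ∨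
          inCyl' s (Function.update z L (!(z L)))) := by
        rintro (h3 | h3)
        · exact h (Or.inl ((hflip2 z).1.mp h3))
        · exact h (Or.inr ((hflip2 z).2.mp h3))
      simp only [if_neg h2]
      rw [Function.update_self, Bool.not_not, Function.update_idem, Function.update_eq_self]
  have hsupp : ∀ z, (∀ i, L + 1 ≤ i → z i = false) → ∀ i, L + 1 ≤ i → ι z i = false := by
    intro z hz i hi
    rw [hι]
    have hin : i ≠ n - 1 := by omega
    have hiL : i ≠ L := by omega
    by_cases h : inCyl s z ∨ inCyl' s z
    · simp only [if_pos h]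
      rw [Function.update_apply, if_neg hin]
      exact hz i hi
    · simp only [if_neg h]
      rw [Function.update_apply, if_neg hiL]
      exact hz i hi
  have hswap : ∀ z, (∀ i, L + 1 ≤ i → z i = false) →
      (z ∈ sideC s L b ↔ ι z ∉ sideC s L b) := by
    intro z _
    by_cases h : inCyl s z
    · have hι1 : ι z = Function.update z (n - 1) (!(z (n - 1))) := by
        rw [hι]; simp only [if_pos (Or.inl h)]
      rw [hι1]
      exact iff_of_true (mem_of_inCyl h)
        (not_mem_of_inCyl' h1 ((hflip1 z).2.mpr h))
    · by_cases h' : inCyl' s z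
      · have hι1 : ι z = Function.update z (n - 1) (!(z (n - 1))) := by
          rw [hι]; simp only [if_pos (Or.inr h')]
        rw [hι1]
        refine iff_of_false (not_mem_of_inCyl' h1 h') ?_
        exact not_not_intro (mem_of_inCyl ((hflip1 z).1.mpr h'))
      · have hι1 : ι z = Function.update z L (!(z L)) := by
          rw [hι]; simp only [if_neg (not_or.mpr ⟨h, h'⟩)]
        rw [hι1]
        have hn1 : ¬ inCyl s (Function.update z L (!(z L))) :=
          fun hc => h ((hflip2 z).1.mp hc)
        have hn2 : ¬ inCyl' s (Function.update z L (!(z L))) :=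
          fun hc => h' ((hflip2 z).2.mp hc)
        rw [mem_iff_out h h', mem_iff_out hn1 hn2]
        have htr : trunc L (Function.update z L (!(z L))) = trunc L z := by
          funext i
          unfold trunc
          by_cases hi : i < L
          · rw [if_pos hi, if_pos hi, Function.update_apply, if_neg (by omega : ¬ i = L)]
          · rw [if_neg hi, if_neg hi]
        rw [htr, Function.update_self]
        exact bool_swap _ _
  exact two_mul_card (sideC s L b) (L + 1) ι hinv hsupp hswap

end SideC

/-! ### Separating a finite set of reals by an initial segment -/

lemma sep_finset (G : Finset (ℕ → Bool)) :
    ∃ L : ℕ, ∀ y ∈ G, ∀ z ∈ G, (∀ i < L, y i = z i) → y = z := by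
  classical
  induction G using Finset.induction_on with
  | empty => exact ⟨0, by simp⟩
  | insert a G ha IH =>
    obtain ⟨L₁, h₁⟩ := IH
    set d : (ℕ → Bool) → ℕ := fun y => if h : ∃ i, a i ≠ y i then Nat.find h + 1 else 0 with hd
    refine ⟨max L₁ (G.sup d), ?_⟩
    have key : ∀ y ∈ G, (∀ i < max L₁ (G.sup d), a i = y i) → a = y := by
      intro y hy hagr
      by_contra hne
      have hex : ∃ i, a i ≠ y i := Function.ne_iff.mp hne
      have hfind := Nat.find_spec hex
      apply hfind
      apply hagr
      have : d y = Nat.find hex + 1 := by rw [hd]; simp only [dif_pos hex]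
      have hle : d y ≤ G.sup d := Finset.le_sup hy
      omega
    intro y hy z hz hagr
    rcases Finset.mem_insert.mp hy with rfl | hy' <;>
      rcases Finset.mem_insert.mp hz with h | hz'
    · rw [h]
    · exact key z hz' hagr
    · subst h
      exact (key y hy' (fun i hi => (hagr i hi).symm)).symm
    · exact h₁ y hy' z hz' (fun i hi => hagr i (lt_of_lt_of_le hi (le_max_left _ _)))

lemma sep_set {F : Set (ℕ → Bool)} (hF : F.Finite) :
    ∃ L : ℕ, ∀ y ∈ F, ∀ z ∈ F, (∀ i < L, y i = z i) → y = z := by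
  obtain ⟨L, hL⟩ := sep_finset hF.toFinset
  exact ⟨L, fun y hy z hz h =>
    hL y (hF.mem_toFinset.mpr hy) z (hF.mem_toFinset.mpr hz) h⟩

/-! ### The key construction -/

lemma exists_C (s : List Bool) (h1 : 1 ≤ s.length) (F : Set (ℕ → Bool)) (hF : F.Finite)
    (hFs : ∀ y ∈ F, ¬ inCyl s y) :
    ∃ C : Set (ℕ → Bool), C ∈ OmegaHalf ∧ (∀ y ∈ F, y ∉ C) ∧ cylSub s C ∧
      ∀ t, cylSub t C → t.length ≤ s.length → t = s := by
  classical
  obtain ⟨L₀, hL₀⟩ := sep_set hF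
  set L := max s.length L₀ with hLdef
  have hL : s.length ≤ L := le_max_left _ _
  set b : (ℕ → Bool) → Bool :=
    fun p => if h : ∃ y, y ∈ F ∧ trunc L y = p then !((Classical.choose h) L) else false with hb
  refine ⟨sideC s L b, omegaHalf_sideC h1 hL, ?_, ?_, uniq_sideC h1 hL⟩
  · -- members of F avoid the constructed set
    intro y hy hmem
    have hnS : ¬ inCyl s y := hFs y hy
    rcases hmem with hmem | ⟨-, -, heq⟩
    · exact hnS hmem
    · have hex : ∃ y', y' ∈ F ∧ trunc L y' = trunc L y := ⟨y, hy, rfl⟩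
      have hbval : b (trunc L y) = !((Classical.choose hex) L) := by
        rw [hb]; simp only [dif_pos hex]
      have hspec := Classical.choose_spec hex
      have hchoose : Classical.choose hex = y := by
        apply hL₀ _ hspec.1 _ hy
        intro i hi
        have hiL : i < L := lt_of_lt_of_le hi (le_max_right _ _)
        have := congrFun hspec.2 i
        rwa [trunc, trunc, if_pos hiL, if_pos hiL] at this
      rw [hbval, hchoose] at heq
      exact bool_ne_not (y L) heq
  · intro z hz
    exact mem_of_inCyl hz

/-! ### The reduction map -/

lemma exists_cyl {C : Set (ℕ → Bool)} (hC : C ∈ OmegaHalf) :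
    ∃ m : ℕ, ∃ t : List Bool, t.length = m ∧ cylSub t C := by
  obtain ⟨hcl, n, hdet, hcard⟩ := hC
  have hne : Nonempty {σ : ℕ → Bool // σ ∈ C ∧ ∀ i : ℕ, n ≤ i → σ i = false} := by
    by_contra h
    rw [not_nonempty_iff] at h
    rw [Nat.card_of_isEmpty, mul_zero] at hcard
    exact absurd hcard.symm (pow_ne_zero n two_ne_zero)
  obtain ⟨σ, hσC, -⟩ := hne.some
  refine ⟨n, (List.range n).map σ, by simp, ?_⟩
  intro z hzc
  apply hdet σ z ?_ hσC
  intro i hi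
  have hlen : i < ((List.range n).map σ).length := by simp [hi]
  have := hzc i hlen
  rw [pat_eq _ hlen] at this
  simp only [List.getElem_map, List.getElem_range] at this
  exact this.symm

attribute [local instance] Classical.propDecidable

noncomputable def redF (C : ↥OmegaHalf) : List Bool :=
  (Nat.find_spec (exists_cyl C.2)).choose

lemma redF_sub (C : ↥OmegaHalf) : cylSub (redF C) C.1 :=
  (Nat.find_spec (exists_cyl C.2)).choose_spec.2

lemma redF_min (C : ↥OmegaHalf) {t : List Bool} (ht : cylSub t C.1) :
    (redF C).length ≤ t.length := by
  have h := (Nat.find_spec (exists_cyl C.2)).choose_spec.1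
  rw [show (redF C).length = Nat.find (exists_cyl C.2) from h]
  exact Nat.find_le ⟨t, rfl, ht⟩

lemma redF_eq (C : ↥OmegaHalf) (s : List Bool) (hs : cylSub s C.1)
    (huniq : ∀ t, cylSub t C.1 → t.length ≤ s.length → t = s) : redF C = s :=
  huniq _ (redF_sub C) (redF_min C hs)
end IbSol

/-- `I_b` is below the Solecki ideal `S` in the Rudin–Keisler order. -/
theorem ib_RK_le_solecki : RKle IbIdeal SoleckiIdeal := by
  classical
  refine ⟨IbSol.redF, fun A => ⟨?_, ?_⟩⟩
  · -- A ∈ I_b → preimage ∈ S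
    rintro ⟨F, hFfin, hsub⟩
    refine ⟨F, hFfin, ?_⟩
    intro C hCA
    have hA : IbSol.redF C ∈ A := hCA
    obtain ⟨x, hxF, hbr⟩ := Set.mem_iUnion₂.mp (hsub hA)
    have hx : IbSol.inCyl (IbSol.redF C) x := (IbSol.mem_branch_iff x _).mp hbr
    exact Set.mem_iUnion₂.mpr ⟨x, hxF, IbSol.redF_sub C x hx⟩
  · -- preimage ∈ S → A ∈ I_b
    rintro ⟨F, hFfin, hsub⟩
    refine ⟨insert (fun _ => false) F, hFfin.insert _, ?_⟩
    intro t htA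
    by_cases h0 : t = []
    · subst h0
      exact Set.mem_iUnion₂.mpr ⟨fun _ => false, Set.mem_insert _ _, ⟨0, by simp⟩⟩
    · by_contra hcon
      have hlen : 1 ≤ t.length := List.length_pos_iff.mpr h0
      have hnb : ∀ y ∈ F, ¬ IbSol.inCyl t y := by
        intro y hy hc
        exact hcon (Set.mem_iUnion₂.mpr
          ⟨y, Set.mem_insert_of_mem _ hy, (IbSol.mem_branch_iff y t).mpr hc⟩)
      obtain ⟨C, hCΩ, havoid, hscyl, huniq⟩ := IbSol.exists_C t hlen F hFfin hnb
      have hfC : IbSol.redF ⟨C, hCΩ⟩ = t := IbSol.redF_eq ⟨C, hCΩ⟩ t hscyl huniq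
      have hmem : (⟨C, hCΩ⟩ : ↥OmegaHalf) ∈ IbSol.redF ⁻¹' A := by
        rw [Set.mem_preimage, hfC]; exact htA
      obtain ⟨y, hyF, hyC⟩ := Set.mem_iUnion₂.mp (hsub hmem)
      exact havoid y hyF hyC
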